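/- Let R be a commutative ring, n ≥ 2, and b, b′ : {1,…,n} → R. Let f : Rⁿ → R² be the R-linear map with f(e_i) = (b_i, b′_i), and set r_{ij} = b_i b′_j − b_j b′_i and d_{ijk} = r_{ij}·e_k + r_{jk}·e_i + r_{ki}·e_j ∈ Rⁿ. Suppose that for every k with 2 ≤ k ≤ n, the following holds: whenever x ∈ R satisfies r_{1k}·x ∈ (r_{12}, …, r_{1(k−1)}) (the ideal generated by r_{12},…,r_{1(k−1)}), then x belongs to the ideal generated by { r_{ij} : 1 ≤ i, j < k }. Then the kernel of f is generated as an R-submodule of Rⁿ by the elements d_{ijk} for 1 ≤ i < j < k ≤ n. -/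

import Mathlib

section StmtAux

variable {R : Type*} [CommRing R] {n : ℕ}

private def Dv (b b' : Fin n → R) (i j k : Fin n) : Fin n → R :=
  Pi.single k (b i * b' j - b j * b' i)
    + Pi.single i (b j * b' k - b k * b' j)
    + Pi.single j (b k * b' i - b i * b' k)

private def spanD (b b' : Fin n → R) : Submodule R (Fin n → R) :=
  Submodule.span R {v : Fin n → R | ∃ i j k : Fin n, i < j ∧ j < k ∧ v = Dv b b' i j k}

private lemma Dv_swap (b b' : Fin n → R) (i j k : Fin n) :
    Dv b b' j i k = -Dv b b' i j k := by
  funext t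
  simp only [Dv, Pi.add_apply, Pi.neg_apply, Pi.single_apply]
  split_ifs <;> ring

private lemma Dv_self (b b' : Fin n → R) (i k : Fin n) : Dv b b' i i k = 0 := by
  funext t
  simp only [Dv, Pi.add_apply, Pi.single_apply, Pi.zero_apply]
  split_ifs <;> ring

private lemma Dv_mem (b b' : Fin n → R) (i j k : Fin n) (hik : i < k) (hjk : j < k) :
    Dv b b' i j k ∈ spanD b b' := by
  rcases lt_trichotomy i j with h | rfl | h
  · exact Submodule.subset_span ⟨i, j, k, h, hjk, rfl⟩
  · rw [Dv_self]; exact zero_mem _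
  · rw [Dv_swap b b' j i k]
    exact neg_mem (Submodule.subset_span ⟨j, i, k, h, hik, rfl⟩)

private lemma sum_mul_Dv (b b' f : Fin n → R) (i j k : Fin n) :
    ∑ t, f t * Dv b b' i j k t =
      f k * (b i * b' j - b j * b' i) + f i * (b j * b' k - b k * b' j)
        + f j * (b k * b' i - b i * b' k) := by
  simp only [Dv, Pi.add_apply, Pi.single_apply, mul_add, mul_ite, mul_zero,
    Finset.sum_add_distrib, Finset.sum_ite_eq', Finset.mem_univ, if_true]

private lemma spanD_ker (b b' : Fin n → R) {v : Fin n → R} (hv : v ∈ spanD b b') :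
    (∑ t, b t * v t = 0) ∧ (∑ t, b' t * v t = 0) := by
  induction hv using Submodule.span_induction with
  | mem v hv =>
    obtain ⟨i, j, k, _, _, rfl⟩ := hv
    constructor <;> (rw [sum_mul_Dv]; ring)
  | zero => simp
  | add u w _ _ hu hw =>
    constructor <;>
      simp only [Pi.add_apply, mul_add, Finset.sum_add_distrib, hu.1, hu.2, hw.1, hw.2, add_zero]
  | smul c u _ hu =>
    have key : ∀ g : Fin n → R, (∑ t, g t * u t = 0) → ∑ t, g t * (c • u) t = 0 := by
      intro g hg
      have : ∑ t, g t * (c • u) t = c * ∑ t, g t * u t := by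
        rw [Finset.mul_sum]
        exact Finset.sum_congr rfl fun t _ => by simp only [Pi.smul_apply, smul_eq_mul]; ring
      rw [this, hg, mul_zero]
    exact ⟨key b hu.1, key b' hu.2⟩

private lemma key_lemma (hn : 1 < n) (b b' : Fin n → R)
    (hreg : ∀ k : Fin n, k ≠ ⟨0, by omega⟩ → ∀ x : R,
      (b ⟨0, by omega⟩ * b' k - b k * b' ⟨0, by omega⟩) * x ∈
          Ideal.span {y : R | ∃ j : Fin n, j ≠ ⟨0, by omega⟩ ∧ j < k ∧
            y = b ⟨0, by omega⟩ * b' j - b j * b' ⟨0, by omega⟩} →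
        x ∈ Ideal.span {y : R | ∃ i j : Fin n, i < k ∧ j < k ∧ y = b i * b' j - b j * b' i}) :
    ∀ m : ℕ, ∀ x : Fin n → R, (∑ t, b t * x t = 0) → (∑ t, b' t * x t = 0) →
      (∀ t : Fin n, m ≤ (t : ℕ) → x t = 0) → x ∈ spanD b b' := by
  have hn0 : 0 < n := by omega
  set e0 : Fin n := ⟨0, hn0⟩ with he0
  intro m
  induction m with
  | zero =>
    intro x _ _ h0
    have : x = 0 := funext fun t => h0 t (Nat.zero_le _)
    rw [this]; exact zero_mem _
  | succ m ih =>
    intro x h1 h2 hsupp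
    by_cases hm : m < n
    swap
    · exact ih x h1 h2 fun t ht => absurd (lt_of_lt_of_le t.isLt (not_lt.1 hm)) (not_lt.2 ht)
    rcases Nat.eq_zero_or_pos m with rfl | hmpos
    · -- base case: x is supported on {0}; show x = 0
      set e1 : Fin n := ⟨1, by omega⟩ with he1
      have hx1 : ∀ t : Fin n, t ≠ e0 → x t = 0 := by
        intro t ht
        exact hsupp t (by
          have : (t : ℕ) ≠ 0 := fun h => ht (Fin.ext h)
          omega)
      have hb : b e0 * x e0 = 0 := by
        rw [← h1]
        rw [Finset.sum_eq_single e0]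
        · intro t _ ht; rw [hx1 t ht, mul_zero]
        · intro h; exact absurd (Finset.mem_univ e0) h
      have hb' : b' e0 * x e0 = 0 := by
        rw [← h2]
        rw [Finset.sum_eq_single e0]
        · intro t _ ht; rw [hx1 t ht, mul_zero]
        · intro h; exact absurd (Finset.mem_univ e0) h
      have h10 : e1 ≠ e0 := by
        intro h
        have := Fin.mk.injEq 1 (by omega : (1:ℕ) < n) 0 hn0 ▸ h
        simp [he1, he0, Fin.ext_iff] at h
      have hz : (b e0 * b' e1 - b e1 * b' e0) * x e0 = 0 := by
        linear_combination b' e1 * hb - b e1 * hb'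
      have hx0 : x e0 ∈ Ideal.span {y : R | ∃ i j : Fin n, i < e1 ∧ j < e1 ∧
          y = b i * b' j - b j * b' i} := by
        apply hreg e1 h10 (x e0)
        rw [hz]; exact zero_mem _
      have hsub : {y : R | ∃ i j : Fin n, i < e1 ∧ j < e1 ∧ y = b i * b' j - b j * b' i} ⊆
          {(0 : R)} := by
        rintro y ⟨i, j, hi, hj, rfl⟩
        have he0v : (e0 : ℕ) = 0 := rfl
        have he1v : (e1 : ℕ) = 1 := rfl
        have hi0 : i = e0 := Fin.ext (by
          have h' : (i : ℕ) < (e1 : ℕ) := hi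
          omega)
        have hj0 : j = e0 := Fin.ext (by
          have h' : (j : ℕ) < (e1 : ℕ) := hj
          omega)
        simp [hi0, hj0]
      have : x e0 = 0 := by
        have h := Ideal.span_le.2 (hsub.trans (by simp : ({(0:R)} : Set R) ⊆ ↑(⊥ : Ideal R))) hx0
        simpa using h
      have hx : x = 0 := by
        funext t
        by_cases ht : t = e0
        · rw [ht, this]; rfl
        · rw [hx1 t ht]; rfl
      rw [hx]; exact zero_mem _
    · -- main step
      set k : Fin n := ⟨m, hm⟩ with hk
      have hk0 : k ≠ e0 := by
        intro h
        have : m = 0 := by simpa [hk, he0, Fin.ext_iff] using h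
        omega
      -- the derived relation ∑ r_{0t} x_t = 0
      have hr : ∑ t, (b e0 * b' t - b t * b' e0) * x t = 0 := by
        have heq : ∑ t, (b e0 * b' t - b t * b' e0) * x t =
            b e0 * ∑ t, b' t * x t - b' e0 * ∑ t, b t * x t := by
          rw [Finset.mul_sum, Finset.mul_sum, ← Finset.sum_sub_distrib]
          exact Finset.sum_congr rfl fun t _ => by ring
        rw [heq, h1, h2]; ring
      have h4 := Finset.add_sum_erase Finset.univ
        (fun t => (b e0 * b' t - b t * b' e0) * x t) (Finset.mem_univ k)
      have h3 : (b e0 * b' k - b k * b' e0) * x k =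
          -∑ t ∈ Finset.univ.erase k, (b e0 * b' t - b t * b' e0) * x t := by
        linear_combination h4 + hr
      have hA : (b e0 * b' k - b k * b' e0) * x k ∈
          Ideal.span {y : R | ∃ j : Fin n, j ≠ e0 ∧ j < k ∧
            y = b e0 * b' j - b j * b' e0} := by
        rw [h3]
        apply neg_mem
        apply Ideal.sum_mem
        intro t ht
        by_cases ht0 : t = e0
        · have : (b e0 * b' t - b t * b' e0) * x t = 0 := by rw [ht0]; ring
          rw [this]; exact zero_mem _
        by_cases htk : (t : ℕ) < m
        · exact Ideal.mul_mem_right _ _ (Ideal.subset_span ⟨t, ht0, htk, rfl⟩)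
        · have htne : t ≠ k := Finset.ne_of_mem_erase ht
          have : x t = 0 := hsupp t (by
            have : (t : ℕ) ≠ m := fun h => htne (Fin.ext h)
            omega)
          rw [this, mul_zero]; exact zero_mem _
      have hxk := hreg k hk0 (x k) hA
      -- produce z ∈ span with z k = x k and z supported on indices ≤ m
      set Tk : Submodule R (Fin n → R) :=
        Submodule.span R {v : Fin n → R | ∃ i j : Fin n, i < k ∧ j < k ∧ v = Dv b b' i j k}
        with hTk
      have hTk_le : Tk ≤ spanD b b' := by
        rw [hTk, Submodule.span_le]
        rintro v ⟨i, j, hik, hjk, rfl⟩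
        exact Dv_mem b b' i j k hik hjk
      have hmap : Ideal.span {y : R | ∃ i j : Fin n, i < k ∧ j < k ∧
          y = b i * b' j - b j * b' i} ≤ Submodule.map (LinearMap.proj k) Tk := by
        apply Submodule.span_le.2
        rintro y ⟨i, j, hik, hjk, rfl⟩
        refine ⟨Dv b b' i j k, Submodule.subset_span ⟨i, j, hik, hjk, rfl⟩, ?_⟩
        simp [Dv, Pi.single_apply, hik.ne', hjk.ne']
      obtain ⟨z, hzT, hzk⟩ := hmap hxk
      have hz_supp : ∀ t : Fin n, m < (t : ℕ) → z t = 0 := by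
        clear hzk h3 h4 hA hxk
        induction hzT using Submodule.span_induction with
        | mem v hv =>
          obtain ⟨i, j, hik, hjk, rfl⟩ := hv
          intro t ht
          have hik' : (i : ℕ) < m := hik
          have hjk' : (j : ℕ) < m := hjk
          have hti : t ≠ i := Fin.ne_of_val_ne (by omega)
          have htj : t ≠ j := Fin.ne_of_val_ne (by omega)
          have htk : t ≠ k := by
            intro h
            rw [h] at ht
            exact lt_irrefl m ht
          simp [Dv, Pi.single_apply, hti, htj, htk]
        | zero => intro t _; rfl
        | add u w _ _ hu hw => intro t ht; simp [Pi.add_apply, hu t ht, hw t ht]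
        | smul c u _ hu => intro t ht; simp [Pi.smul_apply, hu t ht]
      have hz_ker := spanD_ker b b' (hTk_le hzT)
      -- apply the induction hypothesis to x - z
      have h1' : ∑ t, b t * (x - z) t = 0 := by
        simp only [Pi.sub_apply, mul_sub, Finset.sum_sub_distrib, h1, hz_ker.1, sub_zero]
      have h2' : ∑ t, b' t * (x - z) t = 0 := by
        simp only [Pi.sub_apply, mul_sub, Finset.sum_sub_distrib, h2, hz_ker.2, sub_zero]
      have hsupp' : ∀ t : Fin n, m ≤ (t : ℕ) → (x - z) t = 0 := by
        intro t ht
        by_cases htm : (t : ℕ) = m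
        · have : t = k := Fin.ext htm
          subst this
          simp only [Pi.sub_apply]
          rw [show z k = x k from hzk, sub_self]
        · have hlt : m < (t : ℕ) := lt_of_le_of_ne ht (Ne.symm htm)
          simp only [Pi.sub_apply]
          rw [hsupp t (by omega), hz_supp t hlt, sub_self]
      have hx' := ih (x - z) h1' h2' hsupp'
      have : x = (x - z) + z := by ring
      rw [this]
      exact add_mem hx' (hTk_le hzT)

end StmtAux

/-- the regularity criterion, Lemma `l:reg`: under the stated saturation
hypothesis on the `2×2` minors `r_{ij} = b_i b′_j − b_j b′_i`, the kernel of the map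
`Rⁿ → R²`, `x ↦ (∑ b_i x_i, ∑ b′_i x_i)`, is generated by the elements
`d_{ijk} = r_{ij} e_k + r_{jk} e_i + r_{ki} e_j` for `i < j < k`.
(The indices `1, …, n` of the paper are realized as `Fin n`, with `1` corresponding to
the index `⟨0, _⟩`.) -/
theorem stmt10 {R : Type*} [CommRing R] (n : ℕ) (hn : 2 ≤ n)
    (b b' : Fin n → R)
    (hreg : ∀ k : Fin n, k ≠ ⟨0, by omega⟩ → ∀ x : R,
      (b ⟨0, by omega⟩ * b' k - b k * b' ⟨0, by omega⟩) * x ∈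
          Ideal.span {y : R | ∃ j : Fin n, j ≠ ⟨0, by omega⟩ ∧ j < k ∧
            y = b ⟨0, by omega⟩ * b' j - b j * b' ⟨0, by omega⟩} →
        x ∈ Ideal.span {y : R | ∃ i j : Fin n, i < k ∧ j < k ∧ y = b i * b' j - b j * b' i}) :
    ∀ x : Fin n → R,
      ((∑ i, b i * x i = 0 ∧ ∑ i, b' i * x i = 0) ↔
        x ∈ Submodule.span R {v : Fin n → R | ∃ i j k : Fin n, i < j ∧ j < k ∧
          v = Pi.single k (b i * b' j - b j * b' i)
            + Pi.single i (b j * b' k - b k * b' j)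
            + Pi.single j (b k * b' i - b i * b' k)}) := by
  intro x
  have hset : {v : Fin n → R | ∃ i j k : Fin n, i < j ∧ j < k ∧
          v = Pi.single k (b i * b' j - b j * b' i)
            + Pi.single i (b j * b' k - b k * b' j)
            + Pi.single j (b k * b' i - b i * b' k)} =
      {v : Fin n → R | ∃ i j k : Fin n, i < j ∧ j < k ∧ v = Dv b b' i j k} := rfl
  rw [hset]
  constructor
  · rintro ⟨h1, h2⟩
    exact key_lemma hn b b' hreg n x h1 h2 fun t ht => absurd t.isLt (not_lt.2 ht)
  · intro h
    exact spanD_ker b b' h
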